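/- Let q : ℝ → ℝ be continuous on [0,1], and let λ, μ ∈ ℝ with λ ≠ μ. Let f, g : ℝ → ℝ be twice continuously differentiable with −f'' + q f = λ f and −g'' + q g = μ g on [0,1]. Then ∫₀¹ (f(x)² (g²)'(x) − (f²)'(x) g(x)²) dx = ((f g' − f' g)(1)² − (f g' − f' g)(0)²)/(λ − μ). -/

import Mathlib

/-- For `C²` solutions `f, g` of `−u'' + q u = λ u` resp. `−u'' + q u = μ u` on `[0,1]`
with `λ ≠ μ`, we have
`Γ(f², g²) = ∫₀¹ (f² (g²)' − (f²)' g²) = ([f,g](1)² − [f,g](0)²)/(λ − μ)`. -/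
theorem gamma_sq_eq_wronskian_sq_diff
    (q : ℝ → ℝ) (hq : ContinuousOn q (Set.Icc (0:ℝ) 1))
    (lam mu : ℝ) (hlm : lam ≠ mu)
    (f f' f'' g g' g'' : ℝ → ℝ)
    (hf : ∀ x ∈ Set.Icc (0:ℝ) 1, HasDerivAt f (f' x) x ∧ HasDerivAt f' (f'' x) x)
    (hf'' : ContinuousOn f'' (Set.Icc (0:ℝ) 1))
    (hg : ∀ x ∈ Set.Icc (0:ℝ) 1, HasDerivAt g (g' x) x ∧ HasDerivAt g' (g'' x) x)
    (hg'' : ContinuousOn g'' (Set.Icc (0:ℝ) 1))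
    (hfeq : ∀ x ∈ Set.Icc (0:ℝ) 1, -f'' x + q x * f x = lam * f x)
    (hgeq : ∀ x ∈ Set.Icc (0:ℝ) 1, -g'' x + q x * g x = mu * g x) :
    (∫ x in (0:ℝ)..1, ((f x)^2 * (2 * g x * g' x) - (2 * f x * f' x) * (g x)^2)) =
      ((f 1 * g' 1 - f' 1 * g 1)^2 - (f 0 * g' 0 - f' 0 * g 0)^2) / (lam - mu) := by
  have hlm' : lam - mu ≠ 0 := sub_ne_zero.mpr hlm
  set F : ℝ → ℝ := fun x => (f x * g' x - f' x * g x)^2 / (lam - mu) with hF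
  have key : ∀ x ∈ Set.uIcc (0:ℝ) 1,
      HasDerivAt F ((f x)^2 * (2 * g x * g' x) - (2 * f x * f' x) * (g x)^2) x := by
    intro x hx
    rw [Set.uIcc_of_le (by norm_num : (0:ℝ) ≤ 1)] at hx
    have hW : HasDerivAt (fun y => f y * g' y - f' y * g y)
        ((lam - mu) * (f x * g x)) x := by
      have h : HasDerivAt (fun y => f y * g' y - f' y * g y) _ x := ((hf x hx).1.mul (hg x hx).2).sub ((hf x hx).2.mul (hg x hx).1)
      convert h using 1
      have h1 : f'' x = q x * f x - lam * f x := by linarith [hfeq x hx]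
      have h2 : g'' x = q x * g x - mu * g x := by linarith [hgeq x hx]
      rw [h1, h2]; ring
    have hW2 : HasDerivAt (fun y => (f y * g' y - f' y * g y)^2 / (lam - mu)) _ x := (hW.pow 2).div_const (lam - mu)
    convert hW2 using 1
    field_simp
    ring
  have hcont : ContinuousOn
      (fun x => (f x)^2 * (2 * g x * g' x) - (2 * f x * f' x) * (g x)^2)
      (Set.uIcc (0:ℝ) 1) := by
    rw [Set.uIcc_of_le (by norm_num : (0:ℝ) ≤ 1)]
    have cf : ContinuousOn f (Set.Icc (0:ℝ) 1) := fun x hx =>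
      ((hf x hx).1.continuousAt).continuousWithinAt
    have cf' : ContinuousOn f' (Set.Icc (0:ℝ) 1) := fun x hx =>
      ((hf x hx).2.continuousAt).continuousWithinAt
    have cg : ContinuousOn g (Set.Icc (0:ℝ) 1) := fun x hx =>
      ((hg x hx).1.continuousAt).continuousWithinAt
    have cg' : ContinuousOn g' (Set.Icc (0:ℝ) 1) := fun x hx =>
      ((hg x hx).2.continuousAt).continuousWithinAt
    exact ((cf.pow 2).mul ((continuousOn_const.mul cg).mul cg')).sub
      (((continuousOn_const.mul cf).mul cf').mul (cg.pow 2))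
  have := intervalIntegral.integral_eq_sub_of_hasDerivAt key
    (hcont.intervalIntegrable)
  rw [this, hF]
  field_simp
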